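/- Let (a_k)_{k≥1} be a nonincreasing sequence in [0,1] with a_1 > 0 and a_k → x as k → ∞. Then w_n(a_1,…,a_n) → -x·log x as n → ∞ (with the convention 0·log 0 = 0). In particular, if x = 1/e the cutoff strategy is asymptotically optimal, achieving the limit winning probability 1/e. -/

import Mathlib

open Finset Real Filter intervalIntegral

/-- `h(d,n) = Σ_{j=d}^{n} 1/(j-1)` -/
noncomputable def hfun (d n : ℕ) : ℝ := ∑ j ∈ Finset.Icc d n, 1 / ((j : ℝ) - 1)

/-- `s(1,n) = 1/n` and `s(d,n) = ((d-1)/n)·h(d,n)` for `d ≥ 2`. -/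
noncomputable def sfun (d n : ℕ) : ℝ :=
  if d = 1 then 1 / (n : ℝ) else ((d : ℝ) - 1) / (n : ℝ) * hfun d n

/-- `π_{n,k}(a)` for a cutoff sequence `a` (indexed from 1). -/
noncomputable def piNK (n k : ℕ) (a : ℕ → ℝ) : ℝ :=
  if k = 0 then (1 - a 1) ^ n
  else (n : ℝ) * ((n - 1).choose (k - 1) : ℝ) *
        (∫ t in (a (k + 1))..(a k), t ^ (k - 1) * (1 - t) ^ (n - k)) +
      (n.choose k : ℝ) * (a (k + 1)) ^ k * (1 - a (k + 1)) ^ (n - k)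

/-- `w_n(a) = Σ_{k=0}^{n-1} π_{n,k}(a)·s(k+1,n)`, the winning probability of the cutoff
strategy with cutoffs `a_1 ≥ a_2 ≥ ⋯`. -/
noncomputable def w (n : ℕ) (a : ℕ → ℝ) : ℝ :=
  ∑ k ∈ Finset.range n, piNK n k a * sfun (k + 1) n


noncomputable def Bf (n j : ℕ) (t : ℝ) : ℝ := (n.choose j : ℝ) * t ^ j * (1 - t) ^ (n - j)

noncomputable def Gf (n k : ℕ) (t : ℝ) : ℝ := ∑ j ∈ Finset.Icc k n, Bf n j t

noncomputable def Df (n k : ℕ) (t : ℝ) : ℝ :=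
  (n : ℝ) * ((n - 1).choose (k - 1) : ℝ) * t ^ (k - 1) * (1 - t) ^ (n - k)

lemma Gf_split {n k : ℕ} (h : k ≤ n) (t : ℝ) : Gf n k t = Bf n k t + Gf n (k + 1) t := by
  unfold Gf
  rw [show Finset.Icc k n = insert k (Finset.Icc (k+1) n) by ext j; simp; omega,
    Finset.sum_insert (by simp)]

lemma Gf_top (n : ℕ) (t : ℝ) : Gf n n t = t ^ n := by
  unfold Gf
  rw [Finset.Icc_self, Finset.sum_singleton]
  simp [Bf]

lemma Gf_empty {n k : ℕ} (h : n < k) (t : ℝ) : Gf n k t = 0 := by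
  unfold Gf
  rw [Finset.Icc_eq_empty (by omega), Finset.sum_empty]

lemma hasDerivAt_Bf {n j : ℕ} (h1 : 1 ≤ j) (h2 : j ≤ n) (t : ℝ) :
    HasDerivAt (Bf n j) (Df n j t - Df n (j + 1) t) t := by
  have hx : HasDerivAt (fun t : ℝ => t ^ j) ((j : ℝ) * t ^ (j - 1)) t := hasDerivAt_pow j t
  have hy : HasDerivAt (fun t : ℝ => (1 - t) ^ (n - j))
      (((n - j : ℕ) : ℝ) * (1 - t) ^ (n - j - 1) * (-1)) t :=
    ((hasDerivAt_id t).const_sub 1).pow (n - j)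
  have h := (hx.mul hy).const_mul ((n.choose j : ℝ))
  have hfn : Bf n j = fun t : ℝ => (n.choose j : ℝ) * (t ^ j * (1 - t) ^ (n - j)) := by
    funext t; simp [Bf, mul_assoc]
  rw [hfn]
  refine h.congr_deriv (Eq.symm ?_)
  have hn1 : n - 1 + 1 = n := by omega
  have hj1 : j - 1 + 1 = j := by omega
  have A1 := Nat.add_one_mul_choose_eq (n-1) (j-1)
  rw [hn1, hj1] at A1
  have A2 := Nat.add_one_mul_choose_eq (n-1) j
  rw [hn1, Nat.choose_succ_right_eq] at A2
  have rA1 : (n : ℝ) * ((n-1).choose (j-1) : ℝ) = (n.choose j : ℝ) * (j : ℝ) := by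
    exact_mod_cast congrArg (Nat.cast : ℕ → ℝ) A1
  have rA2 : (n : ℝ) * ((n-1).choose j : ℝ) = (n.choose j : ℝ) * ((n - j : ℕ) : ℝ) := by
    exact_mod_cast congrArg (Nat.cast : ℕ → ℝ) A2
  have e1 : n - (j + 1) = n - j - 1 := by omega
  have e2 : j + 1 - 1 = j := by omega
  simp only [Df, e1, e2]
  linear_combination t ^ (j-1) * (1-t) ^ (n-j) * rA1 - t ^ j * (1-t) ^ (n-j-1) * rA2

lemma hasDerivAt_Gf {n k : ℕ} (h1 : 1 ≤ k) (h2 : k ≤ n + 1) (t : ℝ) :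
    HasDerivAt (Gf n k) (Df n k t) t := by
  obtain ⟨d, hd⟩ : ∃ d, k + d = n + 1 := ⟨n + 1 - k, by omega⟩
  induction d generalizing k with
  | zero =>
    have hk : k = n + 1 := by omega
    subst hk
    have : Df n (n+1) t = 0 := by
      cases n with
      | zero => simp [Df]
      | succ m => simp [Df, Nat.choose_eq_zero_of_lt (Nat.lt_succ_self m)]
    rw [this]
    have : Gf n (n+1) = fun _ : ℝ => 0 := by funext s; exact Gf_empty (by omega) s
    rw [this]
    exact hasDerivAt_const t 0
  | succ d ih =>
    have hk : k ≤ n := by omega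
    have hstep := ih (k := k + 1) (by omega) (by omega) (by omega)
    have hB := hasDerivAt_Bf h1 hk t
    have : Gf n k = fun s => Bf n k s + Gf n (k+1) s := by funext s; exact Gf_split hk s
    rw [this]
    have := hB.add hstep
    refine this.congr_deriv (Eq.symm ?_)
    ring

lemma Df_cont (n k : ℕ) : Continuous (Df n k) := by
  unfold Df; fun_prop

lemma Gf_integral {n k : ℕ} (h1 : 1 ≤ k) (h2 : k ≤ n) (u v : ℝ) :
    ∫ t in u..v, Df n k t = Gf n k v - Gf n k u :=
  intervalIntegral.integral_eq_sub_of_hasDerivAt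
    (fun t _ => hasDerivAt_Gf h1 (by omega) t) ((Df_cont n k).intervalIntegrable u v)

lemma Gf_zero (n : ℕ) (t : ℝ) : Gf n 0 t = 1 := by
  unfold Gf
  have : Finset.Icc 0 n = Finset.range (n+1) := by ext j; simp [Nat.lt_succ_iff]
  rw [this]
  calc ∑ j ∈ Finset.range (n+1), Bf n j t
      = ∑ j ∈ Finset.range (n+1), t ^ j * (1 - t) ^ (n - j) * (n.choose j : ℝ) :=
        Finset.sum_congr rfl fun j _ => by unfold Bf; ring
    _ = (t + (1 - t)) ^ n := (add_pow t (1 - t) n).symm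
    _ = 1 := by norm_num

lemma sum_range_Bf {n m : ℕ} (h : m ≤ n + 1) (t : ℝ) :
    ∑ j ∈ Finset.range m, Bf n j t = 1 - Gf n m t := by
  have hsplit : ∑ j ∈ Finset.Ico 0 m, Bf n j t + ∑ j ∈ Finset.Ico m (n+1), Bf n j t
      = ∑ j ∈ Finset.Ico 0 (n+1), Bf n j t :=
    Finset.sum_Ico_consecutive _ (Nat.zero_le m) h
  have e1 : Finset.Ico 0 (n+1) = Finset.Icc 0 n := by ext j; simp [Nat.lt_succ_iff]
  have e2 : Finset.Ico m (n+1) = Finset.Icc m n := by ext j; simp [Nat.lt_succ_iff]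
  rw [e1, e2] at hsplit
  have : (∑ j ∈ Finset.Icc 0 n, Bf n j t) = Gf n 0 t := rfl
  rw [this, Gf_zero] at hsplit
  have : (∑ j ∈ Finset.Icc m n, Bf n j t) = Gf n m t := rfl
  rw [this] at hsplit
  rw [Finset.range_eq_Ico]
  linarith

/-- closed form for piNK, k ≥ 1 -/

lemma pi_eq {n k : ℕ} (h1 : 1 ≤ k) (h2 : k ≤ n) (a : ℕ → ℝ) :
    piNK n k a = Gf n k (a k) - Gf n (k + 1) (a (k + 1)) := by
  have hne : k ≠ 0 := by omega
  rw [piNK, if_neg hne]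
  have hint : (n : ℝ) * ((n - 1).choose (k - 1) : ℝ) *
      (∫ t in (a (k + 1))..(a k), t ^ (k - 1) * (1 - t) ^ (n - k))
      = Gf n k (a k) - Gf n k (a (k + 1)) := by
    rw [← Gf_integral h1 h2 (a (k+1)) (a k), ← intervalIntegral.integral_const_mul]
    apply intervalIntegral.integral_congr
    intro t _
    unfold Df; ring
  rw [hint, Gf_split h2 (a (k+1))]
  unfold Bf; ring

lemma pi_zero {n : ℕ} (hn : 1 ≤ n) (a : ℕ → ℝ) :
    piNK n 0 a = 1 - Gf n 1 (a 1) := by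
  rw [piNK, if_pos rfl]
  have := sum_range_Bf (n := n) (m := 1) (by omega) (a 1)
  rw [Finset.sum_range_one] at this
  rw [← this]
  unfold Bf; simp

lemma sum_pi {n : ℕ} (a : ℕ → ℝ) :
    ∀ K, 1 ≤ K → K ≤ n → ∑ k ∈ Finset.range K, piNK n k a = 1 - Gf n K (a K) := by
  intro K h1 h2
  induction K with
  | zero => omega
  | succ K ih =>
    rcases Nat.eq_or_lt_of_le h1 with h | h
    · rw [← h]
      simpa using pi_zero (by omega) a
    · rw [Finset.sum_range_succ, ih (by omega) (by omega), pi_eq (by omega) (by omega) a]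
      ring

lemma Bf_nonneg {n j : ℕ} {t : ℝ} (h0 : 0 ≤ t) (h1 : t ≤ 1) : 0 ≤ Bf n j t := by
  have h1t : (0:ℝ) ≤ 1 - t := by linarith
  exact mul_nonneg (mul_nonneg (by positivity) (pow_nonneg h0 _)) (pow_nonneg h1t _)

lemma Gf_nonneg {n k : ℕ} {t : ℝ} (h0 : 0 ≤ t) (h1 : t ≤ 1) : 0 ≤ Gf n k t :=
  Finset.sum_nonneg fun j _ => Bf_nonneg h0 h1

lemma Gf_le_one {n k : ℕ} {t : ℝ} (h0 : 0 ≤ t) (h1 : t ≤ 1) : Gf n k t ≤ 1 := by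
  rcases le_or_gt k (n+1) with h | h
  · have hid := sum_range_Bf h t
    have hs : 0 ≤ ∑ j ∈ Finset.range k, Bf n j t :=
      Finset.sum_nonneg fun j _ => Bf_nonneg h0 h1
    linarith
  · rw [show Gf n k t = 0 by unfold Gf; rw [Finset.Icc_eq_empty (by omega)]; simp]
    norm_num

lemma Gf_mono {n k : ℕ} (hk : 1 ≤ k) {t1 t2 : ℝ} (h0 : 0 ≤ t1) (h12 : t1 ≤ t2) (h2 : t2 ≤ 1) :
    Gf n k t1 ≤ Gf n k t2 := by
  rcases le_or_gt k n with h | h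
  · have := Gf_integral hk h t1 t2
    have hnn : 0 ≤ ∫ t in t1..t2, Df n k t := by
      apply intervalIntegral.integral_nonneg h12
      intro t ht
      unfold Df
      have ht0 : 0 ≤ t := le_trans h0 ht.1
      have ht1 : (0:ℝ) ≤ 1 - t := by have := le_trans ht.2 h2; linarith
      exact mul_nonneg (mul_nonneg (by positivity) (pow_nonneg ht0 _)) (pow_nonneg ht1 _)
    linarith
  · unfold Gf; rw [Finset.Icc_eq_empty (by omega)]; simp

lemma pi_nonneg {n k : ℕ} (a : ℕ → ℝ)
    (hrange : ∀ k : ℕ, 1 ≤ k → a k ∈ Set.Icc (0:ℝ) 1)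
    (hanti : ∀ j k : ℕ, 1 ≤ j → j ≤ k → a k ≤ a j) :
    0 ≤ piNK n k a := by
  unfold piNK
  split
  · have h := (hrange 1 le_rfl).2
    exact pow_nonneg (by linarith) _
  · rename_i hk
    have hk1 : 1 ≤ k := by omega
    have h1 := hrange k hk1
    have h2 := hrange (k+1) (by omega)
    have hle : a (k+1) ≤ a k := hanti k (k+1) hk1 (by omega)
    have hint : 0 ≤ ∫ t in (a (k+1))..(a k), t ^ (k - 1) * (1 - t) ^ (n - k) := by
      apply intervalIntegral.integral_nonneg hle
      intro t ht
      have ht0 : 0 ≤ t := le_trans h2.1 ht.1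
      have ht1 : (0:ℝ) ≤ 1 - t := by have := le_trans ht.2 h1.2; linarith
      exact mul_nonneg (pow_nonneg ht0 _) (pow_nonneg ht1 _)
    have hb : (0:ℝ) ≤ (n.choose k : ℝ) * (a (k + 1)) ^ k * (1 - a (k + 1)) ^ (n - k) := by
      have h20 := h2.1
      have h21 : (0:ℝ) ≤ 1 - a (k+1) := by have := h2.2; linarith
      exact mul_nonneg (mul_nonneg (by positivity) (pow_nonneg h20 _)) (pow_nonneg h21 _)
    have hcoef : (0:ℝ) ≤ (n : ℝ) * ((n - 1).choose (k - 1) : ℝ) := by positivity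
    have := mul_nonneg hcoef hint
    linarith

/-- Variance identity for the binomial distribution. -/

lemma binom_var (n : ℕ) (p : ℝ) :
    ∑ j ∈ Finset.range (n + 1), ((j : ℝ) - n * p) ^ 2 * Bf n j p = n * p * (1 - p) := by
  have h := bernsteinPolynomial.variance (R := ℝ) n
  have h2 := congrArg (Polynomial.eval p) h
  simp only [nsmul_eq_mul, bernsteinPolynomial, Polynomial.eval_finset_sum, Polynomial.eval_mul,
    Polynomial.eval_pow, Polynomial.eval_sub, Polynomial.eval_natCast, Polynomial.eval_X,
    Polynomial.eval_one] at h2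
  rw [← h2]
  apply Finset.sum_congr rfl
  intro j _
  unfold Bf
  ring

lemma cheb_upper {n k : ℕ} {p : ℝ} (h0 : 0 ≤ p) (h1 : p ≤ 1) (hk : (n : ℝ) * p < k) :
    Gf n k p ≤ n * p * (1 - p) / ((k : ℝ) - n * p) ^ 2 := by
  have hgap : (0:ℝ) < (k : ℝ) - n * p := by linarith
  rw [le_div_iff₀ (by positivity)]
  calc Gf n k p * ((k : ℝ) - n * p) ^ 2
      = ∑ j ∈ Finset.Icc k n, ((k : ℝ) - n * p) ^ 2 * Bf n j p := by
        unfold Gf; rw [Finset.sum_mul]; exact Finset.sum_congr rfl fun j _ => by ring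
    _ ≤ ∑ j ∈ Finset.Icc k n, ((j : ℝ) - n * p) ^ 2 * Bf n j p := by
        apply Finset.sum_le_sum
        intro j hj
        apply mul_le_mul_of_nonneg_right _ (Bf_nonneg h0 h1)
        have hkj : (k : ℝ) ≤ j := by exact_mod_cast (Finset.mem_Icc.mp hj).1
        have : (0:ℝ) ≤ (j : ℝ) - n * p := by linarith
        apply sq_le_sq' <;> linarith
    _ ≤ ∑ j ∈ Finset.range (n + 1), ((j : ℝ) - n * p) ^ 2 * Bf n j p := by
        apply Finset.sum_le_sum_of_subset_of_nonneg
        · intro j hj; simp at hj ⊢; omega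
        · intro j _ _
          exact mul_nonneg (sq_nonneg _) (Bf_nonneg h0 h1)
    _ = n * p * (1 - p) := binom_var n p

lemma cheb_lower {n m : ℕ} {p : ℝ} (h0 : 0 ≤ p) (h1 : p ≤ 1) (hm : (m : ℝ) < n * p) :
    1 - Gf n (m + 1) p ≤ n * p * (1 - p) / ((n : ℝ) * p - m) ^ 2 := by
  have hgap : (0:ℝ) < (n : ℝ) * p - m := by linarith
  have hmn : m + 1 ≤ n + 1 := by
    have hpn : (n:ℝ) * p ≤ n := by nlinarith
    have hmr : (m:ℝ) < n := by linarith
    have : m < n := by exact_mod_cast hmr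
    omega
  rw [← sum_range_Bf hmn, le_div_iff₀ (by positivity)]
  calc (∑ j ∈ Finset.range (m+1), Bf n j p) * ((n : ℝ) * p - m) ^ 2
      = ∑ j ∈ Finset.range (m+1), ((n : ℝ) * p - m) ^ 2 * Bf n j p := by
        rw [Finset.sum_mul]; exact Finset.sum_congr rfl fun j _ => by ring
    _ ≤ ∑ j ∈ Finset.range (m+1), ((j : ℝ) - n * p) ^ 2 * Bf n j p := by
        apply Finset.sum_le_sum
        intro j hj
        apply mul_le_mul_of_nonneg_right _ (Bf_nonneg h0 h1)
        have hjm : (j : ℝ) ≤ m := by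
          exact_mod_cast Nat.lt_succ_iff.mp (Finset.mem_range.mp hj)
        have e : ((j:ℝ) - n*p)^2 = ((n:ℝ)*p - j)^2 := by ring
        rw [e]
        apply sq_le_sq' <;> linarith
    _ ≤ ∑ j ∈ Finset.range (n + 1), ((j : ℝ) - n * p) ^ 2 * Bf n j p := by
        apply Finset.sum_le_sum_of_subset_of_nonneg
        · intro j hj; simp at hj ⊢; omega
        · intro j _ _
          exact mul_nonneg (sq_nonneg _) (Bf_nonneg h0 h1)
    _ = n * p * (1 - p) := binom_var n p

lemma hfun_eq {n k : ℕ} (hk : k ≤ n) :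
    hfun (k+1) n = ∑ i ∈ Finset.range (n - k), 1 / ((k : ℝ) + i) := by
  unfold hfun
  rw [← Finset.Ico_add_one_right_eq_Icc, Finset.sum_Ico_eq_sum_range]
  have e : n + 1 - (k + 1) = n - k := by omega
  rw [e]
  apply Finset.sum_congr rfl
  intro i _
  push_cast
  ring_nf

lemma log_diff_bounds {m : ℝ} (hm : 1 ≤ m) :
    1 / (m + 1) ≤ Real.log (m + 1) - Real.log m ∧ Real.log (m + 1) - Real.log m ≤ 1 / m := by
  have hm0 : 0 < m := by linarith
  have hm1 : 0 < m + 1 := by linarith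
  have hdiv : Real.log (m + 1) - Real.log m = Real.log ((m + 1) / m) := by
    rw [Real.log_div (by positivity) (by positivity)]
  constructor
  · have h := Real.log_le_sub_one_of_pos (show 0 < m / (m+1) by positivity)
    have e : Real.log (m / (m + 1)) = Real.log m - Real.log (m + 1) := by
      rw [Real.log_div (by positivity) (by positivity)]
    rw [e] at h
    have : m / (m + 1) - 1 = -(1 / (m + 1)) := by field_simp; ring
    rw [this] at h
    linarith
  · have h := Real.log_le_sub_one_of_pos (show 0 < (m + 1) / m by positivity)
    rw [hdiv]
    have : (m + 1) / m - 1 = 1 / m := by field_simp; ring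
    linarith

lemma s_approx {n k : ℕ} (hn : 1 ≤ n) (hk : k < n) :
    |sfun (k+1) n - Real.negMulLog ((k:ℝ)/n)| ≤ 2 / n := by
  have hn0 : (0:ℝ) < n := by exact_mod_cast hn
  rcases Nat.eq_zero_or_pos k with hk0 | hk1
  · subst hk0
    have hsf : sfun 1 n = 1 / n := by simp [sfun]
    rw [show ((0:ℕ):ℝ)/n = 0 by simp, Real.negMulLog_zero]
    rw [show (0:ℕ)+1 = 1 from rfl, hsf, sub_zero, abs_of_nonneg (by positivity)]
    rw [show (2:ℝ)/n = 1/n + 1/n by ring]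
    linarith [le_of_lt (one_div_pos.mpr hn0)]
  · have hk0 : (0:ℝ) < k := by exact_mod_cast hk1
    have hs : sfun (k+1) n = (k / n : ℝ) * hfun (k+1) n := by
      rw [sfun, if_neg (by omega)]
      push_cast
      ring_nf
    set N := n - k with hN
    have hNk : k + N = n := by omega
    -- telescoping log sum
    have hkn : ((k:ℝ) + (N:ℝ)) = (n:ℝ) := by
      rw [← hNk]; push_cast; ring
    have hlog : ∑ i ∈ Finset.range N, (Real.log ((k:ℝ) + (i+1)) - Real.log ((k:ℝ) + i))
        = Real.log n - Real.log k := by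
      have t1 := Finset.sum_range_sub (f := fun i => Real.log ((k:ℝ) + i)) N
      push_cast at t1
      rw [hkn, add_zero] at t1
      exact t1
    -- telescoping 1/m sum
    have htel : ∑ i ∈ Finset.range N, (1 / ((k:ℝ) + i) - 1 / ((k:ℝ) + (i+1)))
        = 1 / k - 1 / n := by
      have t1 := Finset.sum_range_sub' (f := fun i => 1 / ((k:ℝ) + i)) N
      push_cast at t1
      rw [hkn, add_zero] at t1
      exact t1
    have hub : hfun (k+1) n - (Real.log n - Real.log k) ≤ 1 / k - 1 / n := by
      rw [hfun_eq hk.le, ← hlog, ← htel, ← Finset.sum_sub_distrib]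
      apply Finset.sum_le_sum
      intro i _
      have hm : (1:ℝ) ≤ (k:ℝ) + i := by
        have h1 : (0:ℝ) ≤ (i:ℝ) := Nat.cast_nonneg i
        have h2 : (1:ℝ) ≤ (k:ℝ) := by exact_mod_cast hk1
        linarith
      have h := log_diff_bounds hm
      have e : (k:ℝ) + i + 1 = (k:ℝ) + (i+1) := by ring
      rw [e] at h
      linarith [h.1]
    have hlb : 0 ≤ hfun (k+1) n - (Real.log n - Real.log k) := by
      rw [hfun_eq hk.le, ← hlog, ← Finset.sum_sub_distrib]
      apply Finset.sum_nonneg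
      intro i _
      have hm : (1:ℝ) ≤ (k:ℝ) + i := by
        have h1 : (0:ℝ) ≤ (i:ℝ) := Nat.cast_nonneg i
        have h2 : (1:ℝ) ≤ (k:ℝ) := by exact_mod_cast hk1
        linarith
      have h := log_diff_bounds hm
      have e : (k:ℝ) + i + 1 = (k:ℝ) + (i+1) := by ring
      rw [e] at h
      linarith [h.2]
    have hnml : Real.negMulLog ((k:ℝ)/n) = (k/n : ℝ) * (Real.log n - Real.log k) := by
      rw [Real.negMulLog, Real.log_div (by positivity) (by positivity)]
      ring
    rw [hs, hnml, ← mul_sub]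
    rw [abs_mul, abs_of_nonneg (by positivity)]
    have habs : |hfun (k+1) n - (Real.log n - Real.log k)| ≤ 1 / k := by
      rw [abs_of_nonneg hlb]
      have : (0:ℝ) < 1 / n := by positivity
      linarith
    calc (k/n : ℝ) * |hfun (k+1) n - (Real.log n - Real.log k)|
        ≤ (k/n : ℝ) * (1 / k) := by
          apply mul_le_mul_of_nonneg_left habs (by positivity)
      _ = 1 / n := by field_simp
      _ ≤ 2 / n := by
          rw [show (2:ℝ)/n = 1/n + 1/n by ring]
          linarith [le_of_lt (one_div_pos.mpr hn0)]

lemma negMulLog_le_one {u : ℝ} (h0 : 0 ≤ u) (h1 : u ≤ 1) : Real.negMulLog u ≤ 1 := by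
  rcases eq_or_lt_of_le h0 with h | h
  · rw [← h]; norm_num
  · have hlog := Real.log_le_sub_one_of_pos (show 0 < u⁻¹ by positivity)
    rw [Real.log_inv] at hlog
    have he : Real.negMulLog u = u * (-Real.log u) := by rw [Real.negMulLog]; ring
    rw [he]
    calc u * (-Real.log u) ≤ u * (u⁻¹ - 1) := mul_le_mul_of_nonneg_left hlog h0
      _ = 1 - u := by field_simp
      _ ≤ 1 := by linarith

set_option maxHeartbeats 2000000 in
theorem stmt13 (a : ℕ → ℝ) (x : ℝ)
    (hrange : ∀ k : ℕ, 1 ≤ k → a k ∈ Set.Icc (0:ℝ) 1)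
    (hanti : ∀ j k : ℕ, 1 ≤ j → j ≤ k → a k ≤ a j)
    (ha1 : 0 < a 1)
    (hlim : Tendsto a atTop (nhds x)) :
    Tendsto (fun n : ℕ => w n a) atTop (nhds (-x * Real.log x)) := by
  have hx_le : ∀ k : ℕ, 1 ≤ k → x ≤ a k := by
    intro k hk
    apply le_of_tendsto hlim
    filter_upwards [eventually_ge_atTop k] with j hj
    exact hanti k j hk hj
  have hx0 : 0 ≤ x := by
    apply ge_of_tendsto hlim
    filter_upwards [eventually_ge_atTop 1] with j hj
    exact (hrange j hj).1
  have hx1 : x ≤ 1 := le_trans (hx_le 1 le_rfl) (hrange 1 le_rfl).2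
  have hgoal : (-x * Real.log x) = Real.negMulLog x := rfl
  rw [hgoal]
  rcases eq_or_lt_of_le hx1 with hxeq | hxlt
  · -- x = 1 : all cutoffs equal 1 and w n a = 0
    have hone : ∀ k, 1 ≤ k → a k = 1 := fun k hk =>
      le_antisymm (hrange k hk).2 (hxeq ▸ hx_le k hk)
    have hw : ∀ n, w n a = 0 := by
      intro n
      apply Finset.sum_eq_zero
      intro k hk
      have hkn : k < n := Finset.mem_range.mp hk
      have hpi : piNK n k a = 0 := by
        unfold piNK
        split
        · rw [hone 1 le_rfl]
          simp [zero_pow (show n ≠ 0 by omega)]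
        · rename_i h
          rw [hone k (by omega), hone (k+1) (by omega), intervalIntegral.integral_same]
          simp [zero_pow (show n - k ≠ 0 by omega)]
      rw [hpi, zero_mul]
    have : (fun n : ℕ => w n a) = fun _ => 0 := funext hw
    rw [this, hxeq, Real.negMulLog_one]
    exact tendsto_const_nhds
  · -- main case x < 1
    rw [Metric.tendsto_nhds]
    intro ε hε
    obtain ⟨δ', hδ'0, hδ'⟩ :=
      Metric.continuousAt_iff.mp (Real.continuous_negMulLog.continuousAt (x := x)) (ε/4)
        (by positivity)
    set δ : ℝ := min (min (δ'/3) ((1-x)/4)) (if 0 < x then x/4 else 1) with hδdef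
    have hδ0 : 0 < δ := by
      apply lt_min (lt_min (by positivity) (by linarith))
      split
      · rename_i h; linarith
      · norm_num
    have hδa : δ ≤ δ'/3 := le_trans (min_le_left _ _) (min_le_left _ _)
    have hδb : δ ≤ (1-x)/4 := le_trans (min_le_left _ _) (min_le_right _ _)
    have hδδ' : 2*δ < δ' := by linarith
    have hx2δ1 : x + 2*δ < 1 := by linarith
    have hδx : 0 < x → 2*δ < x := by
      intro hx
      have h0 : δ ≤ (if 0 < x then x/4 else 1) := min_le_right _ _
      rw [if_pos hx] at h0
      linarith
    clear_value δ
    clear hδdef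
    -- threshold m beyond which a k ≤ x + δ
    have hm0 : ∀ᶠ k in atTop, a k ≤ x + δ := by
      filter_upwards [Metric.tendsto_nhds.mp hlim δ hδ0] with k hk
      rw [Real.dist_eq] at hk
      have := abs_lt.mp hk
      linarith [this.2]
    obtain ⟨m₀, hm₀⟩ := eventually_atTop.mp hm0
    set m := max m₀ 1 with hmdef
    have hma : ∀ k, m ≤ k → a k ≤ x + δ := fun k hk =>
      hm₀ k (le_trans (le_max_left _ _) hk)
    clear_value m
    clear hmdef
    -- eventual facts
    have F1 : ∀ᶠ n : ℕ in atTop, 1 ≤ n := eventually_ge_atTop 1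
    have F2 : ∀ᶠ n : ℕ in atTop, m ≤ n := eventually_ge_atTop m
    have F3 : ∀ᶠ n : ℕ in atTop, 2/(n:ℝ) < ε/4 :=
      (tendsto_const_div_atTop_nhds_zero_nat 2).eventually_lt_const (by positivity)
    have F4 : ∀ᶠ n : ℕ in atTop, (4/δ^2)/(n:ℝ) < ε/4 :=
      (tendsto_const_div_atTop_nhds_zero_nat (4/δ^2)).eventually_lt_const (by positivity)
    have F5 : ∀ᶠ n : ℕ in atTop, (x+δ)^n < ε/4 :=
      ((tendsto_pow_atTop_nhds_zero_of_lt_one (by positivity) (by linarith)).eventually_lt_const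
        (by positivity))
    have hT6 : Tendsto (fun n : ℕ => (x + 2*δ) * (n:ℝ)) atTop atTop :=
      Tendsto.const_mul_atTop (by positivity)
        (tendsto_natCast_atTop_atTop : Tendsto (fun n : ℕ => (n:ℝ)) atTop atTop)
    have F6 : ∀ᶠ n : ℕ in atTop, (m:ℝ) ≤ (x + 2*δ) * n := hT6.eventually_ge_atTop (m:ℝ)
    have hT7 : Tendsto (fun n : ℕ => (1 - x + 2*δ) * (n:ℝ)) atTop atTop :=
      Tendsto.const_mul_atTop (by linarith)
        (tendsto_natCast_atTop_atTop : Tendsto (fun n : ℕ => (n:ℝ)) atTop atTop)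
    have F7 : ∀ᶠ n : ℕ in atTop, (x - 2*δ)*(n:ℝ) + 1 ≤ (n:ℝ) := by
      filter_upwards [hT7.eventually_ge_atTop 1] with n hn
      have e : (1 - x + 2*δ)*(n:ℝ) = n - (x - 2*δ)*n := by ring
      rw [e] at hn
      linarith
    filter_upwards [F1, F2, F3, F4, F5, F6, F7] with n hn1 hnm hF3 hF4 hF5 hF6 hF7
    have hn0 : (0:ℝ) < n := by exact_mod_cast hn1
    set K := ⌈(x + 2*δ) * n⌉₊ with hK
    set M := if 0 < x then ⌊(x - 2*δ) * n⌋₊ + 1 else 0 with hM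
    have hK1 : 1 ≤ K := Nat.ceil_pos.mpr (by positivity)
    have hKm : m ≤ K := by
      have h := Nat.le_ceil ((x+2*δ)*(n:ℝ))
      have : (m:ℝ) ≤ (K:ℝ) := le_trans hF6 h
      exact_mod_cast this
    have hKge : (x + 2*δ) * (n:ℝ) ≤ (K:ℝ) := Nat.le_ceil _
    have hKlt : ∀ j : ℕ, j < K → ((j:ℝ)) < (x + 2*δ) * n := fun j hj => Nat.lt_ceil.mp hj
    have hMfact : (0 < x → M = ⌊(x - 2*δ) * n⌋₊ + 1) ∧ (¬ 0 < x → M = 0) :=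
      ⟨fun h => by rw [hM, if_pos h], fun h => by rw [hM, if_neg h]⟩
    clear_value K M
    clear hK hM
    have hπ0 : ∀ k, 0 ≤ piNK n k a := fun k => pi_nonneg a hrange hanti
    have hsum_pi_n : ∑ k ∈ Finset.range n, piNK n k a = 1 - (a n)^n := by
      rw [sum_pi a n hn1 le_rfl, Gf_top]
    have han0 : 0 ≤ a n := (hrange n hn1).1
    have han1 : (0:ℝ) ≤ (a n)^n := pow_nonneg han0 n
    have hsum_le : ∑ k ∈ Finset.range n, piNK n k a ≤ 1 := by rw [hsum_pi_n]; linarith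
    have hsum_nonneg : 0 ≤ ∑ k ∈ Finset.range n, piNK n k a :=
      Finset.sum_nonneg fun k _ => hπ0 k
    have hdefect : (a n)^n ≤ (x+δ)^n := pow_le_pow_left₀ han0 (hma n hnm) n
    have hxδ0 : (0:ℝ) ≤ x + δ := by linarith
    have hxδ1 : x + δ ≤ 1 := by linarith
    -- upper far mass
    have hFU : ∑ k ∈ (Finset.range n).filter (fun k => K ≤ k), piNK n k a ≤ 1/(δ^2*n) := by
      rcases le_or_gt K n with hKn | hKn
      · have hfe : (Finset.range n).filter (fun k => K ≤ k) = Finset.Ico K n := by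
          ext k; simp; omega
        rw [hfe, Finset.sum_Ico_eq_sub _ hKn, hsum_pi_n, sum_pi a K hK1 hKn]
        have h1 : Gf n K (a K) ≤ Gf n K (x+δ) :=
          Gf_mono hK1 (hrange K hK1).1 (hma K hKm) hxδ1
        have hid : (x+2*δ)*(n:ℝ) = n*(x+δ) + n*δ := by ring
        have hnd : (0:ℝ) < n*δ := mul_pos hn0 hδ0
        have hlt : (n:ℝ)*(x+δ) < K := by linarith
        have h2 := cheb_upper (n := n) (k := K) hxδ0 hxδ1 hlt
        have hp : (x+δ)*(1-(x+δ)) ≤ 1 := by nlinarith [sq_nonneg (x+δ)]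
        have hnum : (n:ℝ)*(x+δ)*(1-(x+δ)) ≤ n := by
          calc (n:ℝ)*(x+δ)*(1-(x+δ)) = n*((x+δ)*(1-(x+δ))) := by ring
            _ ≤ n*1 := mul_le_mul_of_nonneg_left hp (le_of_lt hn0)
            _ = n := mul_one _
        have hgap : (n:ℝ)*δ ≤ (K:ℝ) - n*(x+δ) := by linarith
        have hden : ((n:ℝ)*δ)^2 ≤ ((K:ℝ) - n*(x+δ))^2 := by
          apply pow_le_pow_left₀ (by positivity) hgap
        have h3 : (n:ℝ)*(x+δ)*(1-(x+δ)) / ((K:ℝ) - n*(x+δ))^2 ≤ (n:ℝ)/((n:ℝ)*δ)^2 :=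
          div_le_div₀ (le_of_lt hn0) hnum (by positivity) hden
        have h4 : (n:ℝ)/((n:ℝ)*δ)^2 = 1/(δ^2*n) := by field_simp
        linarith
      · have hfe : (Finset.range n).filter (fun k => K ≤ k) = ∅ := by
          ext k; simp; omega
        rw [hfe, Finset.sum_empty]
        positivity
    -- lower far mass
    have hFL : ∑ k ∈ (Finset.range n).filter (fun k => k < M), piNK n k a ≤ 1/(δ^2*n) := by
      by_cases hx : 0 < x
      · have hMdef : M = ⌊(x - 2*δ) * n⌋₊ + 1 := hMfact.1 hx
        have h2δx : 2*δ < x := hδx hx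
        have hy0 : (0:ℝ) ≤ (x-2*δ)*n := mul_nonneg (by linarith) (le_of_lt hn0)
        have hfl : ((⌊(x-2*δ)*n⌋₊ : ℕ):ℝ) ≤ (x-2*δ)*n := Nat.floor_le hy0
        have hMn : M ≤ n := by
          have : ((M:ℕ):ℝ) ≤ (n:ℝ) := by rw [hMdef]; push_cast; linarith
          exact_mod_cast this
        have hM1 : 1 ≤ M := by rw [hMdef]; omega
        have hfe : (Finset.range n).filter (fun k => k < M) = Finset.range M := by
          ext k; simp; omega
        rw [hfe, sum_pi a M hM1 hMn]
        have hmono : Gf n M x ≤ Gf n M (a M) :=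
          Gf_mono hM1 hx0 (hx_le M hM1) (hrange M hM1).2
        have hid : (x-2*δ)*(n:ℝ) = n*x - 2*(n*δ) := by ring
        have hnd : (0:ℝ) < n*δ := mul_pos hn0 hδ0
        have hflt : ((⌊(x-2*δ)*n⌋₊ : ℕ):ℝ) < (n:ℝ) * x := by linarith
        have h2 := cheb_lower (n := n) (m := ⌊(x-2*δ)*n⌋₊) hx0 (le_of_lt hxlt) hflt
        rw [← hMdef] at h2
        have hp : x*(1-x) ≤ 1 := by nlinarith [sq_nonneg x]
        have hnum : (n:ℝ)*x*(1-x) ≤ n := by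
          calc (n:ℝ)*x*(1-x) = n*(x*(1-x)) := by ring
            _ ≤ n*1 := mul_le_mul_of_nonneg_left hp (le_of_lt hn0)
            _ = n := mul_one _
        have hgap : (n:ℝ)*δ ≤ (n:ℝ)*x - (⌊(x-2*δ)*n⌋₊ : ℕ) := by linarith
        have hden : ((n:ℝ)*δ)^2 ≤ ((n:ℝ)*x - (⌊(x-2*δ)*n⌋₊ : ℕ))^2 :=
          pow_le_pow_left₀ (by positivity) hgap 2
        have h3 : (n:ℝ)*x*(1-x) / ((n:ℝ)*x - (⌊(x-2*δ)*n⌋₊ : ℕ))^2 ≤ (n:ℝ)/((n:ℝ)*δ)^2 :=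
          div_le_div₀ (le_of_lt hn0) hnum (by positivity) hden
        have h4 : (n:ℝ)/((n:ℝ)*δ)^2 = 1/(δ^2*n) := by field_simp
        linarith [hmono]
      · have hM0 : M = 0 := hMfact.2 hx
        have hfe : (Finset.range n).filter (fun k => k < M) = ∅ := by
          ext k; simp [hM0]
        rw [hfe, Finset.sum_empty]
        positivity
    -- near indices are close
    have hnear : ∀ k, k < n → ¬ (K ≤ k) → ¬ (k < M) →
        |Real.negMulLog ((k:ℝ)/n) - Real.negMulLog x| < ε/4 := by
      intro k hkn hk1 hk2
      have hup : (k:ℝ) < (x+2*δ)*n := hKlt k (not_le.mp hk1)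
      have hkup : (k:ℝ)/n < x + 2*δ := by rw [div_lt_iff₀ hn0]; linarith
      have hklow : x - 2*δ < (k:ℝ)/n := by
        by_cases hx : 0 < x
        · have hMdef : M = ⌊(x - 2*δ) * n⌋₊ + 1 := hMfact.1 hx
          have hkM : M ≤ k := not_lt.mp hk2
          have h1 : (x-2*δ)*n < ((⌊(x-2*δ)*n⌋₊ : ℕ):ℝ) + 1 := Nat.lt_floor_add_one _
          have h2 : ((M:ℕ):ℝ) ≤ (k:ℝ) := by exact_mod_cast hkM
          rw [hMdef] at h2
          push_cast at h2
          rw [lt_div_iff₀ hn0]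
          linarith
        · have hx' : x = 0 := le_antisymm (not_lt.mp hx) hx0
          have : (0:ℝ) ≤ (k:ℝ)/n := by positivity
          rw [hx']
          linarith
      have habs : dist ((k:ℝ)/n) x < δ' := by
        rw [Real.dist_eq, abs_lt]
        constructor <;> linarith
      have := hδ' habs
      rwa [Real.dist_eq] at this
    -- f bounds
    have hfx0 : 0 ≤ Real.negMulLog x := Real.negMulLog_nonneg hx0 hx1
    have hfx1 : Real.negMulLog x ≤ 1 := negMulLog_le_one hx0 hx1
    have hfk : ∀ k, k < n → 0 ≤ Real.negMulLog ((k:ℝ)/n) ∧ Real.negMulLog ((k:ℝ)/n) ≤ 1 := by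
      intro k hkn
      have h0 : (0:ℝ) ≤ (k:ℝ)/n := by positivity
      have h1 : (k:ℝ)/n ≤ 1 := by
        rw [div_le_one hn0]; exact_mod_cast hkn.le
      exact ⟨Real.negMulLog_nonneg h0 h1, negMulLog_le_one h0 h1⟩
    -- decomposition
    set S := ∑ k ∈ Finset.range n, piNK n k a with hS
    have hdecomp : w n a - Real.negMulLog x
        = (∑ k ∈ Finset.range n, piNK n k a * (sfun (k+1) n - Real.negMulLog ((k:ℝ)/n)))
        + (∑ k ∈ Finset.range n, piNK n k a * (Real.negMulLog ((k:ℝ)/n) - Real.negMulLog x))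
        + (S - 1) * Real.negMulLog x := by
      have e1 : (∑ k ∈ Finset.range n, piNK n k a * (sfun (k+1) n - Real.negMulLog ((k:ℝ)/n)))
          + (∑ k ∈ Finset.range n, piNK n k a * (Real.negMulLog ((k:ℝ)/n) - Real.negMulLog x))
          = ∑ k ∈ Finset.range n,
              (piNK n k a * sfun (k+1) n - piNK n k a * Real.negMulLog x) := by
        rw [← Finset.sum_add_distrib]
        exact Finset.sum_congr rfl fun k _ => by ring
      rw [e1, Finset.sum_sub_distrib, ← Finset.sum_mul]
      unfold w
      rw [← hS]
      ring
    -- bounds on the three pieces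
    have hA : |∑ k ∈ Finset.range n, piNK n k a * (sfun (k+1) n - Real.negMulLog ((k:ℝ)/n))|
        ≤ 2/n := by
      calc |∑ k ∈ Finset.range n, piNK n k a * (sfun (k+1) n - Real.negMulLog ((k:ℝ)/n))|
          ≤ ∑ k ∈ Finset.range n, |piNK n k a * (sfun (k+1) n - Real.negMulLog ((k:ℝ)/n))| :=
            Finset.abs_sum_le_sum_abs _ _
        _ ≤ ∑ k ∈ Finset.range n, piNK n k a * (2/n) := by
            apply Finset.sum_le_sum
            intro k hk
            rw [abs_mul, abs_of_nonneg (hπ0 k)]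
            exact mul_le_mul_of_nonneg_left (s_approx hn1 (Finset.mem_range.mp hk)) (hπ0 k)
        _ = S * (2/n) := by rw [← Finset.sum_mul]
        _ ≤ 1 * (2/n) := by
            apply mul_le_mul_of_nonneg_right hsum_le (by positivity)
        _ = 2/n := one_mul _
    have hB : |∑ k ∈ Finset.range n, piNK n k a * (Real.negMulLog ((k:ℝ)/n) - Real.negMulLog x)|
        ≤ ε/4 + (2*(1/(δ^2*n)) + 2*(1/(δ^2*n))) := by
      calc |∑ k ∈ Finset.range n, piNK n k a * (Real.negMulLog ((k:ℝ)/n) - Real.negMulLog x)|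
          ≤ ∑ k ∈ Finset.range n,
              |piNK n k a * (Real.negMulLog ((k:ℝ)/n) - Real.negMulLog x)| :=
            Finset.abs_sum_le_sum_abs _ _
        _ ≤ ∑ k ∈ Finset.range n, (piNK n k a * (ε/4)
              + ((if K ≤ k then 2 * piNK n k a else 0) + (if k < M then 2 * piNK n k a else 0))) := by
            apply Finset.sum_le_sum
            intro k hk
            have hkn := Finset.mem_range.mp hk
            rw [abs_mul, abs_of_nonneg (hπ0 k)]
            have hbig : |Real.negMulLog ((k:ℝ)/n) - Real.negMulLog x| ≤ 2 := by
              have h := hfk k hkn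
              rw [abs_sub_le_iff]
              constructor <;> linarith
            have h3 : (0:ℝ) ≤ piNK n k a * (ε/4) :=
              mul_nonneg (hπ0 k) (by linarith)
            have hp2 : piNK n k a * |Real.negMulLog ((k:ℝ)/n) - Real.negMulLog x|
                ≤ piNK n k a * 2 := mul_le_mul_of_nonneg_left hbig (hπ0 k)
            by_cases hk1 : K ≤ k
            · rw [if_pos hk1]
              have h2 : (0:ℝ) ≤ if k < M then 2 * piNK n k a else 0 := by
                split
                · linarith [hπ0 k]
                · exact le_refl 0
              linarith
            · by_cases hk2 : k < M
              · rw [if_neg hk1, if_pos hk2]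
                linarith
              · have hsmall := hnear k hkn hk1 hk2
                rw [if_neg hk1, if_neg hk2]
                have h4 : piNK n k a * |Real.negMulLog ((k:ℝ)/n) - Real.negMulLog x|
                    ≤ piNK n k a * (ε/4) :=
                  mul_le_mul_of_nonneg_left (le_of_lt hsmall) (hπ0 k)
                linarith
        _ = S * (ε/4) + (2 * ∑ k ∈ (Finset.range n).filter (fun k => K ≤ k), piNK n k a
              + 2 * ∑ k ∈ (Finset.range n).filter (fun k => k < M), piNK n k a) := by
            have eU : ∑ k ∈ Finset.range n, (if K ≤ k then 2 * piNK n k a else 0)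
                = 2 * ∑ k ∈ (Finset.range n).filter (fun k => K ≤ k), piNK n k a := by
              rw [Finset.mul_sum, Finset.sum_filter]
            have eL : ∑ k ∈ Finset.range n, (if k < M then 2 * piNK n k a else 0)
                = 2 * ∑ k ∈ (Finset.range n).filter (fun k => k < M), piNK n k a := by
              rw [Finset.mul_sum, Finset.sum_filter]
            rw [Finset.sum_add_distrib, Finset.sum_add_distrib, ← Finset.sum_mul, eU, eL]
        _ ≤ ε/4 + (2*(1/(δ^2*n)) + 2*(1/(δ^2*n))) := by
            have h1 : S * (ε/4) ≤ 1 * (ε/4) :=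
              mul_le_mul_of_nonneg_right hsum_le (by linarith)
            have h2 := hFU
            have h3 := hFL
            rw [one_mul] at h1
            linarith
    have hC : |(S - 1) * Real.negMulLog x| ≤ (x+δ)^n := by
      rw [abs_mul]
      have e1 : |S - 1| = (a n)^n := by
        rw [abs_of_nonpos (by linarith), hsum_pi_n]
        ring
      rw [e1, abs_of_nonneg hfx0]
      calc (a n)^n * Real.negMulLog x ≤ (a n)^n * 1 :=
            mul_le_mul_of_nonneg_left hfx1 han1
        _ = (a n)^n := mul_one _
        _ ≤ (x+δ)^n := hdefect
    -- put it together
    rw [Real.dist_eq, hdecomp]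
    have habs3 := abs_add_three
      (∑ k ∈ Finset.range n, piNK n k a * (sfun (k+1) n - Real.negMulLog ((k:ℝ)/n)))
      (∑ k ∈ Finset.range n, piNK n k a * (Real.negMulLog ((k:ℝ)/n) - Real.negMulLog x))
      ((S - 1) * Real.negMulLog x)
    have hq : (4/δ^2)/(n:ℝ) = 2*(1/(δ^2*n)) + 2*(1/(δ^2*n)) := by field_simp; ring
    rw [hq] at hF4
    linarith
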